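/- Error bound via rational approximation: let A ∈ ℝ^{n×n} and T ∈ ℝ^{2m×2m} satisfy ‖g(A)‖ ≤ C‖g‖_{L∞(Λ)} and ‖g(T)‖ ≤ C‖g‖_{L∞(Λ)} for all functions g analytic near a compact set Λ (Crouzeix-type bound), and suppose the exactness r(A)V̂ = ‖V̂‖_F V(r(T)e_1 ⊗ I_p) holds for all rationals r ∈ Π_{2m−1}/q_m. Then with f_2m = ‖V̂‖_F V(f(T)e_1 ⊗ I_p), one has ‖f(A)V̂ − f_2m‖_F ≤ 2C‖V̂‖_F · min over r ∈ Π_{2m−1}/q_m of ‖f − r‖_{L∞(Λ)}, for any f analytic near Λ, assuming additionally that the blocks V_i are F-orthonormal so that ‖V(y ⊗ I_p)‖_F = ‖y‖_2 for all y ∈ ℝ^{2m}. -/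

import Mathlib

open Matrix BigOperators Polynomial

/-- Frobenius inner product `⟨X,Y⟩_F = trace(Yᵀ X)`. -/
noncomputable def finner {a b : ℕ} (X Y : Matrix (Fin a) (Fin b) ℝ) : ℝ :=
  Matrix.trace (Yᵀ * X)

/-- Frobenius norm. -/
noncomputable def fnorm {a b : ℕ} (X : Matrix (Fin a) (Fin b) ℝ) : ℝ :=
  Real.sqrt (finner X X)

attribute [local instance] Matrix.frobeniusSeminormedAddCommGroup

lemma finner_self_eq {a b : ℕ} (X : Matrix (Fin a) (Fin b) ℝ) :
    finner X X = ∑ j, ∑ i, X i j ^ 2 := by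
  simp [finner, Matrix.trace, Matrix.mul_apply, Matrix.diag, sq]

lemma fnorm_eq_norm {a b : ℕ} (X : Matrix (Fin a) (Fin b) ℝ) : fnorm X = ‖X‖ := by
  rw [Matrix.frobenius_norm_def, ← Real.sqrt_eq_rpow, fnorm, finner_self_eq]
  congr 1
  rw [Finset.sum_comm]
  congr 1; ext i; congr 1; ext j
  rw [show (2:ℝ) = ((2:ℕ):ℝ) by norm_num, Real.rpow_natCast, Real.norm_eq_abs, sq_abs]

lemma fnorm_nonneg {a b : ℕ} (X : Matrix (Fin a) (Fin b) ℝ) : 0 ≤ fnorm X :=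
  Real.sqrt_nonneg _

lemma fnorm_add_le {a b : ℕ} (X Y : Matrix (Fin a) (Fin b) ℝ) :
    fnorm (X + Y) ≤ fnorm X + fnorm Y := by
  simp only [fnorm_eq_norm]; exact norm_add_le X Y

lemma fnorm_mul_le {a b c : ℕ} (X : Matrix (Fin a) (Fin b) ℝ) (Y : Matrix (Fin b) (Fin c) ℝ) :
    fnorm (X * Y) ≤ fnorm X * fnorm Y := by
  simp only [fnorm_eq_norm]; exact Matrix.frobenius_norm_mul X Y

lemma fnorm_sub_comm {a b : ℕ} (X Y : Matrix (Fin a) (Fin b) ℝ) :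
    fnorm (X - Y) = fnorm (Y - X) := by
  simp only [fnorm_eq_norm]; exact norm_sub_rev X Y

lemma fnorm_smul {a b : ℕ} (c : ℝ) (X : Matrix (Fin a) (Fin b) ℝ) :
    fnorm (c • X) = |c| * fnorm X := by
  simp only [fnorm, finner_self_eq, Matrix.smul_apply, smul_eq_mul, mul_pow, ← Finset.mul_sum]
  rw [Real.sqrt_mul (sq_nonneg c), Real.sqrt_sq_eq_abs]

lemma finner_sum_smul {a b k : ℕ} (V : Fin k → Matrix (Fin a) (Fin b) ℝ)
    (horth : ∀ i j, finner (V i) (V j) = if i = j then 1 else 0) (y z : Fin k → ℝ) :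
    finner (∑ i, y i • V i) (∑ j, z j • V j) = ∑ i, y i * z i := by
  simp only [finner] at horth ⊢
  simp [Matrix.transpose_sum, Matrix.sum_mul, Matrix.mul_sum, Matrix.transpose_smul,
    Matrix.smul_mul, Matrix.mul_smul, Matrix.trace_sum, Matrix.trace_smul, horth,
    smul_eq_mul, mul_ite, mul_one, mul_zero, Finset.sum_ite_eq, mul_comm]

lemma fnorm_sum_smul {a b k : ℕ} (V : Fin k → Matrix (Fin a) (Fin b) ℝ)
    (horth : ∀ i j, finner (V i) (V j) = if i = j then 1 else 0) (y : Fin k → ℝ) :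
    fnorm (∑ i, y i • V i) = Real.sqrt (∑ i, y i ^ 2) := by
  rw [fnorm, finner_sum_smul V horth]; simp [sq]

lemma col_le_fnorm {k : ℕ} (M : Matrix (Fin k) (Fin k) ℝ) (j : Fin k) :
    Real.sqrt (∑ i, (M *ᵥ Pi.single j 1) i ^ 2) ≤ fnorm M := by
  rw [fnorm, finner_self_eq]
  apply Real.sqrt_le_sqrt
  simp only [Matrix.mulVec_single, mul_one, MulOpposite.op_one, one_smul, Matrix.col_apply]
  exact Finset.single_le_sum (f := fun j => ∑ i, M i j ^ 2)
    (fun j _ => Finset.sum_nonneg fun i _ => sq_nonneg _) (Finset.mem_univ j)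

/-- `L∞(Λ)` error of the rational approximant `pol/q_m` to `f`. -/
noncomputable def supErr {m : ℕ} (Λ : Set ℝ) (f : ℝ → ℝ) (ss : Fin m → ℝ)
    (pol : Polynomial ℝ) : ℝ :=
  sSup ((fun x => |f x - Polynomial.eval x pol / ∏ i, (x - ss i)|) '' Λ)

/-- error bound via rational approximation: under Crouzeix-type bounds
`‖f(A) − r(A)‖ ≤ C‖f − r‖_{L∞(Λ)}`, `‖f(T) − r(T)‖ ≤ C‖f − r‖_{L∞(Λ)}` for all rationals
`r ∈ Π_{2m−1}/q_m`, together with exactness of the projection for such rationals and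
F-orthonormality of the block columns, the approximation `f_{2m} = ‖V̂‖_F V(f(T)e₁ ⊗ I_p)`
satisfies `‖f(A)V̂ − f_{2m}‖_F ≤ 2C‖V̂‖_F · min_{r ∈ Π_{2m−1}/q_m} ‖f − r‖_{L∞(Λ)}`. -/
theorem error_bound_rational {n p m : ℕ} (hm : 0 < m)
    (A : Matrix (Fin n) (Fin n) ℝ) (ss : Fin m → ℝ)
    (T : Matrix (Fin (2 * m)) (Fin (2 * m)) ℝ)
    (hAinv : IsUnit ((List.ofFn fun i : Fin m => A - ss i • 1).prod))
    (hTinv : IsUnit ((List.ofFn fun i : Fin m => T - ss i • 1).prod))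
    (V : Fin (2 * m) → Matrix (Fin n) (Fin p) ℝ)
    (horth : ∀ i j, finner (V i) (V j) = if i = j then 1 else 0)
    (Vhat : Matrix (Fin n) (Fin p) ℝ)
    (Λ : Set ℝ) (hΛ : IsCompact Λ) (hΛne : Λ.Nonempty)
    (f : ℝ → ℝ) (C : ℝ) (hC : 0 < C)
    (fA : Matrix (Fin n) (Fin n) ℝ)
    (fT : Matrix (Fin (2 * m)) (Fin (2 * m)) ℝ)
    -- Crouzeix-type bounds applied to `f - r` for every rational `r ∈ Π_{2m−1}/q_m`:
    (hCrouzeixA : ∀ pol : Polynomial ℝ, pol.natDegree ≤ 2 * m - 1 →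
      fnorm (fA - Polynomial.aeval A pol * ((List.ofFn fun i : Fin m => A - ss i • 1).prod)⁻¹)
        ≤ C * supErr Λ f ss pol)
    (hCrouzeixT : ∀ pol : Polynomial ℝ, pol.natDegree ≤ 2 * m - 1 →
      fnorm (fT - Polynomial.aeval T pol * ((List.ofFn fun i : Fin m => T - ss i • 1).prod)⁻¹)
        ≤ C * supErr Λ f ss pol)
    -- exactness for every rational `r ∈ Π_{2m−1}/q_m`:
    (hexact : ∀ pol : Polynomial ℝ, pol.natDegree ≤ 2 * m - 1 →
      Polynomial.aeval A pol * ((List.ofFn fun i : Fin m => A - ss i • 1).prod)⁻¹ * Vhat =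
        fnorm Vhat •
          ∑ i, ((Polynomial.aeval T pol *
              ((List.ofFn fun i : Fin m => T - ss i • 1).prod)⁻¹).mulVec
                (Pi.single ⟨0, by omega⟩ 1)) i • V i)
    (f2m : Matrix (Fin n) (Fin p) ℝ)
    (hf2m : f2m = fnorm Vhat • ∑ i, (fT.mulVec (Pi.single ⟨0, by omega⟩ 1)) i • V i) :
    fnorm (fA * Vhat - f2m) ≤
      2 * C * fnorm Vhat *
        ⨅ pol : { q : Polynomial ℝ // q.natDegree ≤ 2 * m - 1 }, supErr Λ f ss pol.1 := by
  classical
  have hkey : ∀ pol : Polynomial ℝ, pol.natDegree ≤ 2 * m - 1 →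
      fnorm (fA * Vhat - f2m) ≤ 2 * C * fnorm Vhat * supErr Λ f ss pol := by
    intro pol hdeg
    have he := hexact pol hdeg
    have hA := hCrouzeixA pol hdeg
    have hT := hCrouzeixT pol hdeg
    set rA := Polynomial.aeval A pol * ((List.ofFn fun i : Fin m => A - ss i • 1).prod)⁻¹ with hrA
    set rT := Polynomial.aeval T pol * ((List.ofFn fun i : Fin m => T - ss i • 1).prod)⁻¹ with hrT
    have hdecomp : fA * Vhat - f2m =
        (fA - rA) * Vhat +
          fnorm Vhat • ∑ i, (((rT - fT) *ᵥ Pi.single ⟨0, by omega⟩ 1)) i • V i := by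
      rw [Matrix.sub_mul, he, hf2m]
      simp only [Matrix.sub_mulVec, Pi.sub_apply, sub_smul, Finset.sum_sub_distrib, smul_sub]
      abel
    have hstep1 : fnorm (fA * Vhat - f2m) ≤
        fnorm ((fA - rA) * Vhat) +
          fnorm (fnorm Vhat • ∑ i, (((rT - fT) *ᵥ Pi.single ⟨0, by omega⟩ 1)) i • V i) := by
      rw [hdecomp]; exact fnorm_add_le _ _
    have hstep2 : fnorm ((fA - rA) * Vhat) ≤ (C * supErr Λ f ss pol) * fnorm Vhat :=
      le_trans (fnorm_mul_le _ _) (mul_le_mul_of_nonneg_right hA (fnorm_nonneg _))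
    have hstep3 : fnorm (fnorm Vhat • ∑ i, (((rT - fT) *ᵥ Pi.single ⟨0, by omega⟩ 1)) i • V i)
        ≤ fnorm Vhat * (C * supErr Λ f ss pol) := by
      rw [fnorm_smul, abs_of_nonneg (fnorm_nonneg _), fnorm_sum_smul V horth]
      refine mul_le_mul_of_nonneg_left ?_ (fnorm_nonneg _)
      refine le_trans (col_le_fnorm (rT - fT) _) ?_
      rw [fnorm_sub_comm]; exact hT
    calc fnorm (fA * Vhat - f2m)
        ≤ (C * supErr Λ f ss pol) * fnorm Vhat + fnorm Vhat * (C * supErr Λ f ss pol) :=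
          le_trans hstep1 (add_le_add hstep2 hstep3)
      _ = 2 * C * fnorm Vhat * supErr Λ f ss pol := by ring
  have hs_nonneg : ∀ pol : Polynomial ℝ, 0 ≤ supErr Λ f ss pol := by
    intro pol
    apply Real.sSup_nonneg
    rintro x ⟨y, _, rfl⟩
    exact abs_nonneg _
  haveI : Nonempty { q : Polynomial ℝ // q.natDegree ≤ 2 * m - 1 } := ⟨⟨0, by simp⟩⟩
  set K := 2 * C * fnorm Vhat with hK
  have hKnn : 0 ≤ K := mul_nonneg (by linarith) (fnorm_nonneg _)
  rcases hKnn.eq_or_lt with h0 | hKpos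
  · have h1 := hkey 0 (by simp)
    rw [← h0, zero_mul] at h1
    rw [← h0, zero_mul]
    exact h1
  · have hdiv : fnorm (fA * Vhat - f2m) / K ≤
        ⨅ pol : { q : Polynomial ℝ // q.natDegree ≤ 2 * m - 1 }, supErr Λ f ss pol.1 :=
      le_ciInf fun pol => (div_le_iff₀ hKpos).mpr
        (by rw [mul_comm]; exact hkey pol.1 pol.2)
    calc fnorm (fA * Vhat - f2m)
        = fnorm (fA * Vhat - f2m) / K * K := by field_simp
      _ ≤ (⨅ pol : { q : Polynomial ℝ // q.natDegree ≤ 2 * m - 1 }, supErr Λ f ss pol.1) * K :=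
          mul_le_mul_of_nonneg_right hdiv (le_of_lt hKpos)
      _ = K * ⨅ pol : { q : Polynomial ℝ // q.natDegree ≤ 2 * m - 1 }, supErr Λ f ss pol.1 :=
          mul_comm _ _
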